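/- Let F ∈ L_1(S). Let K, L ⊆ S be two compact nondegenerate intervals and let e ∈ S be such that (K+ℤ) ∩ (L+ℤ) ⊆ {e}+ℤ and F(e) ∉ L+ℤ. Suppose there exist k_1, k_2, k_3, k_4 ∈ ℤ such that L positively (F−k_1)-covers L, L positively (F−k_2)-covers K, K negatively (F−k_3)-covers L, and K negatively (F−k_4)-covers K. Then Per(F) ⊇ ℕ∖{2}. -/

import Mathlib

open Set Filter Function

noncomputable section

/-- The real axis in `ℂ`. -/
def realAxis : Set ℂ := {z : ℂ | z.im = 0}

/-- The union of the branches of `S`. -/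
def branches : Set ℂ := {z : ℂ | (∃ m : ℤ, z.re = (m : ℝ)) ∧ z.im ∈ Set.Icc (0 : ℝ) 1}

/-- The universal covering `S = ℝ ∪ B` of the space `σ`. -/
def Sspace : Set ℂ := realAxis ∪ branches

/-- The branch `B_m`. -/
def branch (m : ℤ) : Set ℂ := {z : ℂ | z.re = (m : ℝ) ∧ z.im ∈ Set.Icc (0 : ℝ) 1}

/-- `F` is a continuous self-map of `S` of degree `d`, i.e. `F ∈ L_d(S)`. -/
def DegMap (d : ℤ) (F : ℂ → ℂ) : Prop :=
  Set.MapsTo F Sspace Sspace ∧ ContinuousOn F Sspace ∧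
    ∀ z ∈ Sspace, F (z + 1) = F z + (d : ℂ)

/-- `z` is a periodic (mod 1) point of `F` of period `n`. -/
def IsPeriodicMod1 (F : ℂ → ℂ) (z : ℂ) (n : ℕ) : Prop :=
  0 < n ∧ (∃ k : ℤ, F^[n] z = z + (k : ℂ)) ∧
    ∀ i : ℕ, 0 < i → i < n → ∀ k : ℤ, F^[i] z ≠ z + (k : ℂ)

/-- The set `Per(F)` of periods (mod 1) of `F`. -/
def PerSet (F : ℂ → ℂ) : Set ℕ := {n : ℕ | ∃ z ∈ Sspace, IsPeriodicMod1 F z n}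

/-- `x` is a true periodic point of `G` of least period `n`. -/
def IsTruePeriodic (G : ℂ → ℂ) (x : ℂ) (n : ℕ) : Prop :=
  0 < n ∧ G^[n] x = x ∧ ∀ i : ℕ, 0 < i → i < n → G^[i] x ≠ x

/-- The rotation number of `z` under `F` is `ρ`. -/
def HasRotNum (F : ℂ → ℂ) (z : ℂ) (ρ : ℝ) : Prop :=
  Filter.Tendsto (fun n : ℕ => ((F^[n] z).re - z.re) / (n : ℝ)) Filter.atTop (nhds ρ)

/-- `Rot_ℝ(F)`. -/
def RotR (F : ℂ → ℂ) : Set ℝ := {ρ : ℝ | ∃ x : ℝ, HasRotNum F (x : ℂ) ρ}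

/-- `Rot(F)`. -/
def RotSet (F : ℂ → ℂ) : Set ℝ := {ρ : ℝ | ∃ z ∈ Sspace, HasRotNum F z ρ}

/-- `Per(α, F)`: periods (mod 1) of points with rotation number `α`. -/
def PerRot (F : ℂ → ℂ) (α : ℝ) : Set ℕ :=
  {n : ℕ | ∃ z ∈ Sspace, IsPeriodicMod1 F z n ∧ HasRotNum F z α}

/-- The Sharkovsky ordering `a ≤_Sh b`. -/
def sharkLe (a b : ℕ) : Prop :=
  if ordCompl[2] a = 1 then
    (if ordCompl[2] b = 1 then a.factorization 2 ≤ b.factorization 2 else True)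
  else
    ordCompl[2] b ≠ 1 ∧ (b.factorization 2 < a.factorization 2 ∨
      (b.factorization 2 = a.factorization 2 ∧ ordCompl[2] b ≤ ordCompl[2] a))

/-- The initial segment `Shs(s)` of the Sharkovsky ordering. -/
def Shs (s : ℕ) : Set ℕ := {k : ℕ | 0 < k ∧ sharkLe k s}

/-- Initial segments of the Sharkovsky ordering: either `Shs(s)` for some `s ∈ ℕ`,
or the set of all powers of `2` (corresponding to the symbol `2^∞`). -/
def ShInitialSeg (E : Set ℕ) : Prop :=
  (∃ s : ℕ, 0 < s ∧ E = Shs s) ∨ E = {k : ℕ | ∃ i : ℕ, k = 2 ^ i}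

/-- `M(c, d)`. -/
def Mset (c d : ℝ) : Set ℕ :=
  {n : ℕ | 0 < n ∧ ∃ k : ℤ, c < (k : ℝ) / (n : ℝ) ∧ (k : ℝ) / (n : ℝ) < d}

/-- `Λ(ρ, E)`. -/
def Lam (ρ : ℝ) (E : Set ℕ) : Set ℕ :=
  {m : ℕ | ∃ k : ℤ, ∃ n : ℕ, 0 < n ∧ Int.gcd k (n : ℤ) = 1 ∧ ρ = (k : ℝ) / (n : ℝ) ∧
    ∃ q ∈ E, m = n * q}

/-- The lifted orbit of `z` under `F`. -/
def LOrb (F : ℂ → ℂ) (z : ℂ) : Set ℂ :=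
  {w : ℂ | ∃ n : ℕ, ∃ k : ℤ, w = F^[n] z + (k : ℂ)}

/-- The convex hull of `A` in `S`: the smallest closed connected subset of `S`
containing `A`. -/
def sHull (A : Set ℂ) : Set ℂ :=
  ⋂₀ {C : Set ℂ | A ⊆ C ∧ C ⊆ Sspace ∧ IsClosed C ∧ IsConnected C}

/-- Compact nondegenerate intervals of `S`. -/
def IsCNInterval (I : Set ℂ) : Prop :=
  ∃ a b : ℂ, a ∈ Sspace ∧ b ∈ Sspace ∧ a ≠ b ∧ I = sHull {a, b}

/-- `I` `G`-covers `J`: there is a subinterval `I' ⊆ I` with `G(I') = J`. -/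
def Covers (G : ℂ → ℂ) (I J : Set ℂ) : Prop :=
  ∃ a b : ℂ, a ∈ I ∧ b ∈ I ∧ sHull {a, b} ⊆ I ∧ G '' sHull {a, b} = J

/-- The interior of `K` relative to the subspace `S`. -/
def relInterior (K : Set ℂ) : Set ℂ := {z ∈ Sspace | K ∈ nhdsWithin z Sspace}

/-- The map `F_0 : S → B_0`, `F_0(z) = F(z) − Re(F(z))`. -/
def Fzero (F : ℂ → ℂ) (z : ℂ) : ℂ := F z - ((F z).re : ℂ)

/-- The set `A + ℤ` of integer translates of `A`. -/
def trZ (A : Set ℂ) : Set ℂ := {w : ℂ | ∃ z ∈ A, ∃ k : ℤ, w = z + (k : ℂ)}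

/-- `(I, <_I)` positively `G`-covers `(J, <_J)`, where `I` is the oriented interval with
endpoints `a = min I`, `b = max I`, and `J` the oriented interval with endpoints
`c = min J`, `d = max J`; the order along `I` is: `x ≤_I y` iff `x ∈ ⟨{a, y}⟩`. -/
def PosCovers (G : ℂ → ℂ) (a b c d : ℂ) : Prop :=
  ∃ x y : ℂ, x ∈ sHull {a, b} ∧ y ∈ sHull {a, b} ∧ x ∈ sHull {a, y} ∧ G x = c ∧ G y = d

/-- `(I, <_I)` negatively `G`-covers `(J, <_J)`. -/
def NegCovers (G : ℂ → ℂ) (a b c d : ℂ) : Prop := PosCovers G a b d c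

/-- A concrete 3-star `X₃ ⊆ ℂ` with branching point `0`: the union of the three
segments `[-1,0]`, `[0,1]` and `[0,i]`. -/
def star3 : Set ℂ :=
  {z : ℂ | z.im = 0 ∧ z.re ∈ Set.Icc (-1 : ℝ) 1} ∪
    {z : ℂ | z.re = 0 ∧ z.im ∈ Set.Icc (0 : ℝ) 1}

/-- `TPer(f)`: the set of least periods of the periodic points of `f` in `X`. -/
def TPer (f : ℂ → ℂ) (X : Set ℂ) : Set ℕ :=
  {n : ℕ | ∃ x ∈ X, IsTruePeriodic f x n}

open Classical in
/-- The taxicab distance on `S`. -/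
def sDist (x y : ℂ) : ℝ :=
  if (∃ m : ℤ, x.re = (m : ℝ) ∧ y.re = (m : ℝ)) ∧
      x.im ∈ Set.Icc (0 : ℝ) 1 ∧ y.im ∈ Set.Icc (0 : ℝ) 1 then
    |x.im - y.im|
  else |x.im| + |x.re - y.re| + |y.im|

/-! ### Basic lemmas about `Sspace` -/

lemma mem_Sspace_iff {z : ℂ} :
    z ∈ Sspace ↔ z.im = 0 ∨ ((∃ m : ℤ, z.re = (m : ℝ)) ∧ 0 ≤ z.im ∧ z.im ≤ 1) := by
  simp [Sspace, realAxis, branches, Set.mem_Icc, and_assoc]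

lemma Sspace.im_nonneg {z : ℂ} (hz : z ∈ Sspace) : 0 ≤ z.im := by
  rcases mem_Sspace_iff.1 hz with h | h
  · simp [h]
  · exact h.2.1

lemma Sspace.im_le_one {z : ℂ} (hz : z ∈ Sspace) : z.im ≤ 1 := by
  rcases mem_Sspace_iff.1 hz with h | h
  · simp [h]
  · exact h.2.2

lemma Sspace.int_re_of_im_pos {z : ℂ} (hz : z ∈ Sspace) (h : 0 < z.im) :
    ∃ m : ℤ, z.re = (m : ℝ) := by
  rcases mem_Sspace_iff.1 hz with h0 | h0
  · exact absurd h0 (by linarith)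
  · exact h0.1

lemma int_abs_lt_one {m₁ m₂ : ℤ} (h : |(m₁ : ℝ) - (m₂ : ℝ)| < 1) : (m₁ : ℝ) = m₂ := by
  have hh : m₁ = m₂ := by
    by_contra hne
    have h1 : (1:ℤ) ≤ |m₁ - m₂| := Int.one_le_abs (by omega)
    have h2 : (1 : ℝ) ≤ |(m₁ : ℝ) - (m₂ : ℝ)| := by
      calc (1:ℝ) = ((1:ℤ):ℝ) := by norm_num
      _ ≤ ((|m₁ - m₂| : ℤ) : ℝ) := by exact_mod_cast h1
      _ = |(m₁:ℝ) - (m₂:ℝ)| := by push_cast [Int.cast_abs]; ring_nf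
    linarith
  rw [hh]

lemma dist_re_le (z w : ℂ) : |z.re - w.re| ≤ dist z w := by
  rw [Complex.dist_eq]
  simpa using Complex.abs_re_le_norm (z - w)

lemma dist_im_le (z w : ℂ) : |z.im - w.im| ≤ dist z w := by
  rw [Complex.dist_eq]
  simpa using Complex.abs_im_le_norm (z - w)

lemma Sspace_add_int {z : ℂ} (hz : z ∈ Sspace) (k : ℤ) : z + (k : ℂ) ∈ Sspace := by
  rcases mem_Sspace_iff.1 hz with h | ⟨⟨m, hm⟩, h0, h1⟩
  · exact mem_Sspace_iff.2 (Or.inl (by simp [h]))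
  · exact mem_Sspace_iff.2 (Or.inr ⟨⟨m + k, by push_cast; simp [hm]⟩, by simp [h0], by simp [h1]⟩)

/-! ### `trZ` lemmas -/

lemma mem_trZ_of_mem {A : Set ℂ} {z : ℂ} (hz : z ∈ A) (k : ℤ) : z + (k : ℂ) ∈ trZ A :=
  ⟨z, hz, k, rfl⟩

lemma mem_trZ_self {A : Set ℂ} {z : ℂ} (hz : z ∈ A) : z ∈ trZ A := by
  simpa using mem_trZ_of_mem hz 0

lemma trZ_add_int {A : Set ℂ} {z : ℂ} (hz : z ∈ trZ A) (k : ℤ) : z + (k : ℂ) ∈ trZ A := by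
  obtain ⟨w, hw, j, rfl⟩ := hz
  exact ⟨w, hw, j + k, by push_cast; ring⟩

lemma trZ_of_add_int {A : Set ℂ} {z : ℂ} (k : ℤ) (hz : z + (k : ℂ) ∈ trZ A) : z ∈ trZ A := by
  have := trZ_add_int hz (-k)
  simpa using this

lemma mem_trZ_singleton {e z : ℂ} (hz : z ∈ trZ {e}) : ∃ k : ℤ, z = e + (k : ℂ) := by
  obtain ⟨w, hw, k, rfl⟩ := hz
  rcases hw with rfl
  exact ⟨k, rfl⟩

/-! ### Degree-1 map lemmas -/

lemma DegMap.translate {F : ℂ → ℂ} (hF : DegMap 1 F) {z : ℂ} (hz : z ∈ Sspace) (k : ℤ) :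
    F (z + (k : ℂ)) = F z + (k : ℂ) := by
  obtain ⟨hmap, hcont, hper⟩ := hF
  induction k using Int.induction_on with
  | zero => simp
  | succ n ih =>
      have hz' : z + (n : ℂ) ∈ Sspace := Sspace_add_int hz n
      have := hper _ hz'
      push_cast at ih ⊢
      rw [show z + ((n : ℂ) + 1) = z + (n : ℂ) + 1 by ring, this, ih]
      push_cast
      ring
  | pred n ih =>
      have hz' : z + (-(n : ℂ) - 1) ∈ Sspace := by
        have h := Sspace_add_int hz (-n - 1)
        have he : ((-n - 1 : ℤ) : ℂ) = -(n : ℂ) - 1 := by push_cast; ring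
        rwa [he] at h
      have h0 := hper _ hz'
      push_cast at ih h0 ⊢
      rw [show z + (-(n : ℂ) - 1) + 1 = z + -(n:ℂ) by ring] at h0
      have h2 : F (z + (-(n:ℂ) - 1)) = F (z + -(n:ℂ)) - 1 := by rw [h0]; ring
      rw [h2, ih]; ring

lemma DegMap.iterate_mem {F : ℂ → ℂ} (hF : DegMap 1 F) {z : ℂ} (hz : z ∈ Sspace) (n : ℕ) :
    F^[n] z ∈ Sspace := by
  induction n with
  | zero => simpa
  | succ n ih => rw [Function.iterate_succ_apply']; exact hF.1 ih

/-! ### The separation lemma -/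

lemma mem_of_sep {C : Set ℂ} (hCS : C ⊆ Sspace) (hC : IsPreconnected C)
    {pp qq z : ℂ} (hp : pp ∈ C) (hq : qq ∈ C) {O : Set ℂ} (hO : IsOpen O)
    (hppO : pp ∈ O) (hqqO : qq ∉ O) (hqz : qq ≠ z)
    (hcl : ∀ w ∈ closure (O ∩ Sspace), w ∈ Sspace → w ∈ (O ∩ Sspace) ∪ {z}) :
    z ∈ C := by
  by_contra hz
  have hcover : C ⊆ O ∪ (closure (O ∩ Sspace))ᶜ := by
    intro w hw
    by_cases hwO : w ∈ O
    · exact Or.inl hwO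
    · refine Or.inr ?_
      intro hwc
      rcases hcl w hwc (hCS hw) with h | h
      · exact hwO h.1
      · rcases h with rfl
        exact hz hw
  have h1 : (C ∩ O).Nonempty := ⟨pp, hp, hppO⟩
  have h2 : (C ∩ (closure (O ∩ Sspace))ᶜ).Nonempty := by
    refine ⟨qq, hq, ?_⟩
    intro hqc
    rcases hcl qq hqc (hCS hq) with h | h
    · exact hqqO h.1
    · exact hqz h
  obtain ⟨x, hxC, hxO, hxc⟩ := hC O (closure (O ∩ Sspace))ᶜ hO isClosed_closure.isOpen_compl
    hcover h1 h2
  exact hxc (subset_closure ⟨hxO, hCS hxC⟩)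
/-! ### Parametrizations of arcs in `S` -/

structure Param (p q : ℂ) where
  len : ℝ
  γ : ℝ → ℂ
  ξ : ℂ → ℝ
  len_pos : 0 < len
  γ_cont : Continuous γ
  ξ_cont : Continuous ξ
  γ_zero : γ 0 = p
  γ_len : γ len = q
  γ_mem : ∀ t ∈ Set.Icc (0:ℝ) len, γ t ∈ Sspace
  ξγ : ∀ t ∈ Set.Icc (0:ℝ) len, ξ (γ t) = t
  ξ_mem : ∀ w ∈ Sspace, ξ w ∈ Set.Icc (0:ℝ) len
  hull_eq : sHull {p, q} = γ '' Set.Icc (0:ℝ) len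
  locconst : ∀ w ∈ Sspace, w ∉ γ '' Set.Icc (0:ℝ) len →
    ∃ ε > 0, ∀ w' ∈ Sspace, dist w' w < ε → ξ w' = ξ w

namespace Param

variable {p q : ℂ}

lemma γξ (P : Param p q) {w : ℂ} (hw : w ∈ P.γ '' Set.Icc (0:ℝ) P.len) :
    P.γ (P.ξ w) = w := by
  obtain ⟨t, ht, rfl⟩ := hw
  rw [P.ξγ t ht]

lemma image_subset_S (P : Param p q) : P.γ '' Set.Icc (0:ℝ) P.len ⊆ Sspace := by
  rintro w ⟨t, ht, rfl⟩; exact P.γ_mem t ht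

lemma p_mem_image (P : Param p q) : p ∈ P.γ '' Set.Icc (0:ℝ) P.len :=
  ⟨0, ⟨le_refl _, P.len_pos.le⟩, P.γ_zero⟩

lemma q_mem_image (P : Param p q) : q ∈ P.γ '' Set.Icc (0:ℝ) P.len :=
  ⟨P.len, ⟨P.len_pos.le, le_refl _⟩, P.γ_len⟩

lemma ξ_p (P : Param p q) : P.ξ p = 0 := by
  have h := P.ξγ 0 ⟨le_refl _, P.len_pos.le⟩
  rw [P.γ_zero] at h; exact h

lemma ξ_q (P : Param p q) : P.ξ q = P.len := by
  have h := P.ξγ P.len ⟨P.len_pos.le, le_refl _⟩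
  rw [P.γ_len] at h; exact h

/-- images of compact subintervals are closed connected subsets of `S`. -/
lemma image_closed (P : Param p q) {s t : ℝ} : IsClosed (P.γ '' Set.Icc s t) :=
  ((isCompact_Icc).image P.γ_cont).isClosed

lemma image_conn (P : Param p q) {s t : ℝ} (hst : s ≤ t) :
    IsConnected (P.γ '' Set.Icc s t) :=
  ⟨⟨P.γ s, ⟨s, ⟨le_refl _, hst⟩, rfl⟩⟩, (isPreconnected_Icc).image _ P.γ_cont.continuousOn⟩

/-- the hull of `p` and an arc point `γ v` is contained in the initial part of the arc. -/
lemma hull_sub_initial (P : Param p q) {v : ℝ} (hv : v ∈ Set.Icc (0:ℝ) P.len) :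
    sHull {p, P.γ v} ⊆ P.γ '' Set.Icc (0:ℝ) v := by
  apply Set.sInter_subset_of_mem
  refine ⟨?_, ?_, P.image_closed, P.image_conn hv.1⟩
  · rintro w (rfl | rfl)
    · exact ⟨0, ⟨le_refl _, hv.1⟩, P.γ_zero⟩
    · exact ⟨v, ⟨hv.1, le_refl _⟩, rfl⟩
  · intro w hw
    apply P.image_subset_S
    obtain ⟨t, ht, rfl⟩ := hw
    exact ⟨t, ⟨ht.1, le_trans ht.2 hv.2⟩, rfl⟩

/-- key order lemma : if `x ∈ ⟨{p, y}⟩` then `ξ x ≤ ξ y`. -/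
lemma ξ_mono (P : Param p q) {x y : ℂ} (hy : y ∈ P.γ '' Set.Icc (0:ℝ) P.len)
    (hx : x ∈ sHull {p, y}) : P.ξ x ≤ P.ξ y ∧ x ∈ P.γ '' Set.Icc (0:ℝ) P.len := by
  obtain ⟨v, hv, rfl⟩ := hy
  rw [P.ξγ v hv]
  have h2 := P.hull_sub_initial hv hx
  obtain ⟨s, hs, rfl⟩ := h2
  have hs' : s ∈ Set.Icc (0:ℝ) P.len := ⟨hs.1, le_trans hs.2 hv.2⟩
  rw [P.ξγ s hs']
  exact ⟨hs.2, ⟨s, hs', rfl⟩⟩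

/-- reversal of a parametrization. -/
def reverse (P : Param p q) : Param q p where
  len := P.len
  γ := fun t => P.γ (P.len - t)
  ξ := fun w => P.len - P.ξ w
  len_pos := P.len_pos
  γ_cont := P.γ_cont.comp (continuous_const.sub continuous_id)
  ξ_cont := continuous_const.sub P.ξ_cont
  γ_zero := by simpa using P.γ_len
  γ_len := by simpa using P.γ_zero
  γ_mem := fun t ht => P.γ_mem _ ⟨by linarith [ht.2], by linarith [ht.1]⟩
  ξγ := fun t ht => by
    show P.len - P.ξ (P.γ (P.len - t)) = t
    rw [P.ξγ _ ⟨by linarith [ht.2], by linarith [ht.1]⟩]; ring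
  ξ_mem := fun w hw => by
    have h := P.ξ_mem w hw
    constructor
    · show (0:ℝ) ≤ P.len - P.ξ w; linarith [h.2]
    · show P.len - P.ξ w ≤ P.len; linarith [h.1]
  hull_eq := by
    rw [Set.pair_comm q p, P.hull_eq]
    ext w
    constructor
    · rintro ⟨t, ht, rfl⟩
      exact ⟨P.len - t, ⟨by linarith [ht.2], by linarith [ht.1]⟩,
        by show P.γ (P.len - (P.len - t)) = P.γ t; congr 1; ring⟩
    · rintro ⟨t, ht, rfl⟩
      exact ⟨P.len - t, ⟨by linarith [ht.2], by linarith [ht.1]⟩, rfl⟩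
  locconst := by
    intro w hw hwim
    have hwim' : w ∉ P.γ '' Set.Icc (0:ℝ) P.len := by
      intro ⟨t, ht, hteq⟩
      exact hwim ⟨P.len - t, ⟨by linarith [ht.2], by linarith [ht.1]⟩,
        by show P.γ (P.len - (P.len - t)) = w; rw [← hteq]; congr 1; ring⟩
    obtain ⟨ε, hε, hcc⟩ := P.locconst w hw hwim'
    exact ⟨ε, hε, fun w' hw' hd => by
      show P.len - P.ξ w' = P.len - P.ξ w; rw [hcc w' hw' hd]⟩

end Param
/-! ### Complex point helpers -/

def mkC (x y : ℝ) : ℂ := (x : ℂ) + (y : ℂ) * Complex.I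

@[simp] lemma mkC_re (x y : ℝ) : (mkC x y).re = x := by simp [mkC]
@[simp] lemma mkC_im (x y : ℝ) : (mkC x y).im = y := by simp [mkC]

lemma mkC_self (z : ℂ) : mkC z.re z.im = z := by
  apply Complex.ext <;> simp

lemma continuous_mkC {α : Type*} [TopologicalSpace α] {f g : α → ℝ}
    (hf : Continuous f) (hg : Continuous g) : Continuous fun a => mkC (f a) (g a) := by
  unfold mkC
  exact (Complex.continuous_ofReal.comp hf).add
    ((Complex.continuous_ofReal.comp hg).mul continuous_const)

lemma sHull_subset_of {p q : ℂ} {D : Set ℂ} (h : p ∈ D) (h' : q ∈ D) (hDS : D ⊆ Sspace)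
    (hcl : IsClosed D) (hconn : IsConnected D) : sHull {p, q} ⊆ D :=
  Set.sInter_subset_of_mem ⟨by rintro w (rfl | rfl) <;> assumption, hDS, hcl, hconn⟩

/-! ### Two closure computations used for the separation argument -/

lemma branch_side_sub {z : ℂ} (hzre : ∃ m : ℤ, z.re = (m : ℝ)) (hzim : 0 ≤ z.im) :
    ∀ w' ∈ ({w : ℂ | z.im < w.im ∧ |w.re - z.re| < 1} ∩ Sspace),
      w'.re = z.re ∧ z.im < w'.im := by
  rintro w' ⟨⟨h1, h2⟩, hS⟩
  have him' : 0 < w'.im := lt_of_le_of_lt hzim h1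
  obtain ⟨m', hm'⟩ := Sspace.int_re_of_im_pos hS him'
  obtain ⟨m, hm⟩ := hzre
  refine ⟨?_, h1⟩
  rw [hm', hm]
  exact int_abs_lt_one (by rw [← hm', ← hm]; exact h2)

lemma branch_closure {z : ℂ} (hzre : ∃ m : ℤ, z.re = (m : ℝ)) (hzim : 0 ≤ z.im) :
    ∀ w ∈ closure ({w : ℂ | z.im < w.im ∧ |w.re - z.re| < 1} ∩ Sspace), w ∈ Sspace →
      w ∈ ({w : ℂ | z.im < w.im ∧ |w.re - z.re| < 1} ∩ Sspace) ∪ {z} := by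
  intro w hwc hwS
  have hOS := branch_side_sub hzre hzim
  have hre : w.re = z.re := by
    by_contra hne
    have hd : 0 < |w.re - z.re| := abs_pos.2 (sub_ne_zero.2 hne)
    obtain ⟨w', hw', hdist⟩ := Metric.mem_closure_iff.1 hwc _ hd
    have h := (hOS w' hw').1
    have h2 := dist_re_le w w'
    rw [h] at h2
    linarith
  have him : z.im ≤ w.im := by
    by_contra hlt
    push_neg at hlt
    obtain ⟨w', hw', hdist⟩ := Metric.mem_closure_iff.1 hwc (z.im - w.im) (by linarith)
    have h := (hOS w' hw').2
    have h2 := dist_im_le w w'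
    have h3 := abs_lt.1 (lt_of_le_of_lt h2 hdist)
    linarith
  rcases eq_or_lt_of_le him with heq | hlt
  · exact Or.inr (Complex.ext hre heq.symm)
  · exact Or.inl ⟨⟨hlt, by rw [hre]; simp⟩, hwS⟩

lemma right_closure {z : ℂ} (hzim : z.im = 0) :
    ∀ w ∈ closure ({w : ℂ | z.re < w.re} ∩ Sspace), w ∈ Sspace →
      w ∈ ({w : ℂ | z.re < w.re} ∩ Sspace) ∪ {z} := by
  intro w hwc hwS
  have hre : z.re ≤ w.re := by
    by_contra hlt
    push_neg at hlt
    obtain ⟨w', hw', hdist⟩ := Metric.mem_closure_iff.1 hwc (z.re - w.re) (by linarith)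
    have h : z.re < w'.re := hw'.1
    have h2 := dist_re_le w w'
    have h3 := abs_lt.1 (lt_of_le_of_lt h2 hdist)
    linarith
  rcases eq_or_lt_of_le hre with heq | hlt
  · right
    refine Complex.ext heq.symm ?_
    rw [hzim]
    by_contra hne
    have hwim : 0 < w.im := lt_of_le_of_lt (le_refl 0) (lt_of_le_of_ne (Sspace.im_nonneg hwS)
      (Ne.symm hne))
    obtain ⟨m, hm⟩ := Sspace.int_re_of_im_pos hwS hwim
    obtain ⟨w', hw', hdist⟩ := Metric.mem_closure_iff.1 hwc (min w.im 1)
      (lt_min hwim one_pos)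
    have him' : 0 < w'.im := by
      have h2 := dist_im_le w w'
      have h3 := abs_lt.1 (lt_of_le_of_lt h2 hdist)
      have : dist w w' < w.im := lt_of_lt_of_le hdist (min_le_left _ _)
      have h4 := abs_lt.1 (lt_of_le_of_lt h2 this)
      linarith
    obtain ⟨m', hm'⟩ := Sspace.int_re_of_im_pos hw'.2 him'
    have hgt : w.re < w'.re := heq ▸ hw'.1
    have : (m : ℝ) < (m' : ℝ) := by rw [← hm, ← hm']; exact hgt
    have hint : (m : ℝ) + 1 ≤ (m' : ℝ) := by exact_mod_cast Int.add_one_le_of_lt (by exact_mod_cast this)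
    have h2 := dist_re_le w w'
    have h3 := abs_lt.1 (lt_of_le_of_lt h2 (lt_of_lt_of_le hdist (min_le_right _ _)))
    rw [hm, hm'] at h3
    linarith
  · exact Or.inl ⟨hlt, hwS⟩
/-! ### The vertical parametrization -/

def vparam (p q : ℂ) (hp : p ∈ Sspace) (hq : q ∈ Sspace) (hre : p.re = q.re)
    (him : p.im < q.im) : Param p q := by
  have h0 : 0 ≤ p.im := Sspace.im_nonneg hp
  have h1 : q.im ≤ 1 := Sspace.im_le_one hq
  have hqpos : 0 < q.im := lt_of_le_of_lt h0 him
  have hpreE : ∃ m : ℤ, p.re = (m : ℝ) := by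
    obtain ⟨mz, hmz⟩ := Sspace.int_re_of_im_pos hq hqpos
    exact ⟨mz, by rw [hre, hmz]⟩
  refine
  { len := q.im - p.im
    γ := fun t => mkC p.re (p.im + t)
    ξ := fun w => max 0 (min (max w.im p.im) q.im - p.im - |w.re - p.re|)
    len_pos := by linarith
    γ_cont := continuous_mkC continuous_const (continuous_const.add continuous_id)
    ξ_cont := continuous_const.max ((((Complex.continuous_im.max continuous_const).min
      continuous_const).sub continuous_const).sub
      ((Complex.continuous_re.sub continuous_const).abs))
    γ_zero := by simpa using mkC_self p
    γ_len := by
      show mkC p.re (p.im + (q.im - p.im)) = q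
      rw [show p.im + (q.im - p.im) = q.im by ring, hre, mkC_self]
    γ_mem := fun t ht => mem_Sspace_iff.2 (Or.inr ⟨by simpa using hpreE,
      by simp; linarith [ht.1], by simp; linarith [ht.2]⟩)
    ξγ := fun t ht => ?_
    ξ_mem := fun w hw => ?_
    hull_eq := ?_
    locconst := fun w hw hwim => ?_ }
  · -- ξγ
    simp only [mkC_re, mkC_im, sub_self, abs_zero, sub_zero]
    rw [max_eq_left (by linarith [ht.1] : p.im ≤ p.im + t),
      min_eq_left (by linarith [ht.2] : p.im + t ≤ q.im),
      show p.im + t - p.im = t by ring]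
    exact max_eq_right ht.1
  · -- ξ_mem
    refine ⟨le_max_left _ _, ?_⟩
    apply max_le (by linarith)
    linarith [min_le_right (max w.im p.im) q.im, abs_nonneg (w.re - p.re)]
  · -- hull_eq
    have hγcont : Continuous (fun t : ℝ => mkC p.re (p.im + t)) :=
      continuous_mkC continuous_const (continuous_const.add continuous_id)
    have himage : (fun t => mkC p.re (p.im + t)) '' Set.Icc (0:ℝ) (q.im - p.im) =
        {w : ℂ | w.re = p.re ∧ p.im ≤ w.im ∧ w.im ≤ q.im} := by
      ext w
      constructor
      · rintro ⟨t, ht, rfl⟩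
        exact ⟨by simp, by simp; linarith [ht.1], by simp; linarith [ht.2]⟩
      · rintro ⟨hwre, hw0, hw1⟩
        refine ⟨w.im - p.im, ⟨by linarith, by linarith⟩, ?_⟩
        show mkC p.re (p.im + (w.im - p.im)) = w
        rw [show p.im + (w.im - p.im) = w.im by ring, ← hwre, mkC_self]
    rw [himage]
    apply le_antisymm
    · apply sHull_subset_of
      · exact ⟨rfl, le_refl _, him.le⟩
      · exact ⟨hre.symm, him.le, le_refl _⟩
      · rintro w ⟨hwre, hw0, hw1⟩
        exact mem_Sspace_iff.2 (Or.inr ⟨by rw [hwre]; exact hpreE, by linarith, by linarith⟩)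
      · rw [← himage]
        exact ((isCompact_Icc).image hγcont).isClosed
      · rw [← himage]
        exact ⟨⟨mkC p.re (p.im + 0), ⟨0, ⟨le_refl _, by linarith⟩, rfl⟩⟩,
          (isPreconnected_Icc).image _ hγcont.continuousOn⟩
    · -- minimality
      rintro z ⟨hzre, hz0, hz1⟩
      intro C hC
      obtain ⟨hpq, hCS, hCcl, hCconn⟩ := hC
      rcases eq_or_lt_of_le hz0 with hz0' | hz0'
      · exact (Complex.ext hzre hz0'.symm : z = p) ▸ hpq (Or.inl rfl)
      rcases eq_or_lt_of_le hz1 with hz1' | hz1'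
      · exact (Complex.ext (hzre.trans hre) hz1' : z = q) ▸ hpq (Or.inr rfl)
      refine mem_of_sep hCS hCconn.isPreconnected (hpq (Or.inr rfl)) (hpq (Or.inl rfl))
        (O := {w : ℂ | z.im < w.im ∧ |w.re - z.re| < 1}) ?_ ?_ ?_ ?_
        (branch_closure (by rw [hzre]; exact hpreE) (by linarith))
      · exact IsOpen.inter (isOpen_lt continuous_const Complex.continuous_im)
          (isOpen_lt ((Complex.continuous_re.sub continuous_const).abs) continuous_const)
      · exact ⟨hz1', by rw [hzre, hre]; simp⟩
      · intro hmem
        exact absurd hmem.1 (by push_neg; exact hz0'.le)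
      · intro hh
        rw [hh] at hz0'
        exact lt_irrefl _ hz0'
  · -- locconst
    set V := (fun t => mkC p.re (p.im + t)) '' Set.Icc (0:ℝ) (q.im - p.im) with hV
    have hVmem : ∀ w' : ℂ, w'.re = p.re → p.im ≤ w'.im → w'.im ≤ q.im → w' ∈ V := by
      intro w' h1' h2' h3'
      refine ⟨w'.im - p.im, ⟨by linarith, by linarith⟩, ?_⟩
      show mkC p.re (p.im + (w'.im - p.im)) = w'
      rw [show p.im + (w'.im - p.im) = w'.im by ring, ← h1', mkC_self]
    -- ξ vanishes below the arc and off the branch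
    have hB : ∀ w' : ℂ, w'.im ≤ p.im →
        max 0 (min (max w'.im p.im) q.im - p.im - |w'.re - p.re|) = 0 := by
      intro w' hw'
      rw [max_eq_right hw', min_eq_left (by linarith)]
      apply max_eq_left
      simp [abs_nonneg]
    have hA : ∀ w' ∈ Sspace, w'.re ≠ p.re →
        max 0 (min (max w'.im p.im) q.im - p.im - |w'.re - p.re|) = 0 := by
      intro w' hw'S hw'ne
      rcases le_or_gt w'.im p.im with hle | hgt
      · exact hB w' hle
      · have him' : 0 < w'.im := lt_of_le_of_lt h0 hgt
        obtain ⟨m', hm'⟩ := Sspace.int_re_of_im_pos hw'S him'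
        obtain ⟨mz, hpre⟩ := hpreE
        have hge1 : 1 ≤ |w'.re - p.re| := by
          rw [hm', hpre]
          by_contra hcon
          push_neg at hcon
          exact hw'ne (by rw [hm', hpre]; exact int_abs_lt_one hcon)
        apply max_eq_left
        have := min_le_right (max w'.im p.im) q.im
        linarith
    by_cases hwre : w.re = p.re
    · rcases lt_or_ge w.im p.im with hwlo | hwge
      · -- below the arc
        refine ⟨p.im - w.im, by linarith, fun w' hw' hd => ?_⟩
        have h2 := abs_lt.1 (lt_of_le_of_lt (dist_im_le w' w) hd)
        exact (hB w' (by linarith)).trans (hB w (by linarith)).symm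
      · -- above the arc
        have hwhi : q.im < w.im := by
          rcases le_or_gt w.im q.im with hc | hc
          · exact absurd (hVmem w hwre hwge hc) hwim
          · exact hc
        refine ⟨w.im - q.im, by linarith, fun w' hw' hd => ?_⟩
        have h2 := abs_lt.1 (lt_of_le_of_lt (dist_im_le w' w) hd)
        have h3 := abs_lt.1 (lt_of_le_of_lt (dist_re_le w' w) hd)
        have hq' : q.im < w'.im := by linarith
        have him' : 0 < w'.im := by linarith
        obtain ⟨m', hm'⟩ := Sspace.int_re_of_im_pos hw' him'
        have hwim1 : w.im ≤ 1 := Sspace.im_le_one hw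
        have hεle : w.im - q.im < 1 := by linarith
        obtain ⟨mz, hpre⟩ := hpreE
        have hre' : w'.re = p.re := by
          rw [hm', hpre]
          apply int_abs_lt_one
          rw [← hm', ← hpre, ← hwre]
          calc |w'.re - w.re| ≤ dist w' w := dist_re_le w' w
          _ < w.im - q.im := hd
          _ < 1 := hεle
        have e1 : max 0 (min (max w'.im p.im) q.im - p.im - |w'.re - p.re|) = q.im - p.im := by
          have a1 : max w'.im p.im = w'.im := max_eq_left (by linarith)
          have a2 : min w'.im q.im = q.im := min_eq_right (by linarith)
          rw [hre', sub_self, abs_zero, sub_zero, a1, a2]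
          exact max_eq_right (by linarith)
        have e2 : max 0 (min (max w.im p.im) q.im - p.im - |w.re - p.re|) = q.im - p.im := by
          have a1 : max w.im p.im = w.im := max_eq_left (by linarith)
          have a2 : min w.im q.im = q.im := min_eq_right (by linarith)
          rw [hwre, sub_self, abs_zero, sub_zero, a1, a2]
          exact max_eq_right (by linarith)
        exact e1.trans e2.symm
    · -- off the branch
      rcases eq_or_lt_of_le (Sspace.im_nonneg hw) with hwim0 | hwim0
      · -- real point
        refine ⟨|w.re - p.re|, abs_pos.2 (sub_ne_zero.2 hwre), fun w' hw' hd => ?_⟩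
        have hne' : w'.re ≠ p.re := by
          intro hcon
          have := lt_of_le_of_lt (dist_re_le w' w) hd
          rw [hcon] at this
          have : |p.re - w.re| < |w.re - p.re| := this
          rw [abs_sub_comm] at this
          exact lt_irrefl _ this
        exact (hA w' hw' hne').trans (hA w hw hwre).symm
      · -- branch point, other branch
        obtain ⟨m', hm'⟩ := Sspace.int_re_of_im_pos hw hwim0
        refine ⟨min w.im 1, lt_min hwim0 one_pos, fun w' hw' hd => ?_⟩
        have h2 := abs_lt.1 (lt_of_le_of_lt (dist_im_le w' w) (lt_of_lt_of_le hd (min_le_left _ _)))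
        have him' : 0 < w'.im := by linarith
        obtain ⟨m'', hm''⟩ := Sspace.int_re_of_im_pos hw' him'
        have h3 := lt_of_le_of_lt (dist_re_le w' w) (lt_of_lt_of_le hd (min_le_right _ _))
        have hre' : w'.re = w.re := by
          rw [hm'', hm']
          exact int_abs_lt_one (by rw [← hm'', ← hm']; exact h3)
        exact (hA w' hw' (by rw [hre']; exact hwre)).trans (hA w hw hwre).symm
/-! ### The horizontal parametrization -/

/-- the bump term `max 0 (min im X2 - |re - X1|)` vanishes off the branch at `X1`. -/
lemma term_vanish {X1 X2 : ℝ} (hX0 : 0 ≤ X2) (hX1 : X2 ≤ 1) (hXi : 0 < X2 → ∃ m : ℤ, X1 = (m : ℝ))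
    {w : ℂ} (him0 : 0 ≤ w.im) (himpos : 0 < w.im → ∃ m : ℤ, w.re = (m : ℝ))
    (hne : w.re ≠ X1) : max 0 (min w.im X2 - |w.re - X1|) = 0 := by
  apply max_eq_left
  rcases eq_or_lt_of_le him0 with h | h
  · have : min w.im X2 = 0 := by rw [← h]; exact min_eq_left hX0
    rw [this]
    simp [abs_nonneg]
  · rcases eq_or_lt_of_le hX0 with h2 | h2
    · have : min w.im X2 = 0 := by rw [← h2]; exact min_eq_right h.le
      rw [this]
      simp [abs_nonneg]
    · obtain ⟨m, hm⟩ := himpos h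
      obtain ⟨m', hm'⟩ := hXi h2
      have hge : 1 ≤ |w.re - X1| := by
        by_contra hcon
        push_neg at hcon
        exact hne (by rw [hm, hm']; exact int_abs_lt_one (by rw [← hm, ← hm']; exact hcon))
      have := min_le_right w.im X2
      linarith

lemma term_on {X1 X2 : ℝ} (hX0 : 0 ≤ X2) {w : ℂ} (hre : w.re = X1) (him : 0 ≤ w.im) :
    max 0 (min w.im X2 - |w.re - X1|) = min w.im X2 := by
  rw [hre, sub_self, abs_zero, sub_zero]
  exact max_eq_right (le_min him hX0)

def hγ (p q : ℂ) : ℝ → ℂ := fun t =>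
  if t ≤ p.im then mkC p.re (p.im - t)
  else if t ≤ p.im + (q.re - p.re) then mkC (p.re + (t - p.im)) 0
  else mkC q.re (t - (p.im + (q.re - p.re)))

def hξ (p q : ℂ) : ℂ → ℝ := fun w =>
  p.im + (min (max w.re p.re) q.re - p.re) - max 0 (min w.im p.im - |w.re - p.re|)
    + max 0 (min w.im q.im - |w.re - q.re|)

def hparam (p q : ℂ) (hp : p ∈ Sspace) (hq : q ∈ Sspace) (hlt : p.re < q.re) : Param p q := by
  have hP0 : 0 ≤ p.im := Sspace.im_nonneg hp
  have hP1 : p.im ≤ 1 := Sspace.im_le_one hp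
  have hQ0 : 0 ≤ q.im := Sspace.im_nonneg hq
  have hQ1 : q.im ≤ 1 := Sspace.im_le_one hq
  have hPi : 0 < p.im → ∃ m : ℤ, p.re = (m : ℝ) := fun h => Sspace.int_re_of_im_pos hp h
  have hQi : 0 < q.im → ∃ m : ℤ, q.re = (m : ℝ) := fun h => Sspace.int_re_of_im_pos hq h
  have hne : p.re ≠ q.re := ne_of_lt hlt
  -- values of ξ on the three pieces
  have hξ1 : ∀ s : ℝ, 0 ≤ s → s ≤ p.im → hξ p q (mkC p.re s) = p.im - s := by
    intro s h0 h1
    unfold hξ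
    rw [term_on hP0 (by simp) (by simp [h0]), term_vanish hQ0 hQ1 hQi (by simp [h0])
      (fun h => by simpa using hPi (by simp at h; linarith)) (by simpa using hne)]
    simp only [mkC_re, mkC_im]
    rw [max_eq_left (le_refl p.re) , min_eq_left hlt.le, min_eq_left h1]
    ring
  have hξ2 : ∀ x : ℝ, p.re ≤ x → x ≤ q.re → hξ p q (mkC x 0) = p.im + (x - p.re) := by
    intro x h0 h1
    unfold hξ
    have t1 : max 0 (min (mkC x 0).im p.im - |(mkC x 0).re - p.re|) = 0 := by
      simp only [mkC_re, mkC_im]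
      rw [min_eq_left hP0]
      exact max_eq_left (by simp [abs_nonneg])
    have t2 : max 0 (min (mkC x 0).im q.im - |(mkC x 0).re - q.re|) = 0 := by
      simp only [mkC_re, mkC_im]
      rw [min_eq_left hQ0]
      exact max_eq_left (by simp [abs_nonneg])
    rw [t1, t2]
    simp only [mkC_re]
    rw [max_eq_left h0, min_eq_left h1]
    ring
  have hξ3 : ∀ s : ℝ, 0 ≤ s → s ≤ q.im → hξ p q (mkC q.re s) = p.im + (q.re - p.re) + s := by
    intro s h0 h1
    unfold hξ
    rw [term_on hQ0 (by simp) (by simp [h0]), term_vanish hP0 hP1 hPi (by simp [h0])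
      (fun h => by simpa using hQi (by simp at h; linarith)) (by simpa using hne.symm)]
    simp only [mkC_re, mkC_im]
    rw [max_eq_left hlt.le, min_eq_right (le_refl q.re), min_eq_left h1]
    ring
  -- membership of the pieces in S
  have hSp : ∀ s : ℝ, 0 ≤ s → s ≤ p.im → mkC p.re s ∈ Sspace := by
    intro s h0 h1
    rcases eq_or_lt_of_le h0 with h | h
    · exact mem_Sspace_iff.2 (Or.inl (by simp [← h]))
    · exact mem_Sspace_iff.2 (Or.inr ⟨by simpa using hPi (by linarith),
        by simpa using h.le, by simp; linarith⟩)
  have hSq : ∀ s : ℝ, 0 ≤ s → s ≤ q.im → mkC q.re s ∈ Sspace := by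
    intro s h0 h1
    rcases eq_or_lt_of_le h0 with h | h
    · exact mem_Sspace_iff.2 (Or.inl (by simp [← h]))
    · exact mem_Sspace_iff.2 (Or.inr ⟨by simpa using hQi (by linarith),
        by simpa using h.le, by simp; linarith⟩)
  have hγcont : Continuous (hγ p q) := by
    unfold hγ
    apply Continuous.if_le
    · exact continuous_mkC continuous_const (continuous_const.sub continuous_id)
    · apply Continuous.if_le
      · exact continuous_mkC (continuous_const.add (continuous_id.sub continuous_const))
          continuous_const
      · exact continuous_mkC continuous_const (continuous_id.sub continuous_const)
      · exact continuous_id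
      · exact continuous_const
      · intro t ht
        rw [ht]
        apply Complex.ext
        · simp only [mkC_re]; ring
        · simp only [mkC_im]; ring
    · exact continuous_id
    · exact continuous_const
    · intro t ht
      rw [ht]
      rw [if_pos (by linarith : p.im ≤ p.im + (q.re - p.re))]
      congr 1 <;> ring_nf
  -- the image description
  have himage : hγ p q '' Set.Icc (0:ℝ) (p.im + (q.re - p.re) + q.im) =
      {w : ℂ | w.re = p.re ∧ 0 ≤ w.im ∧ w.im ≤ p.im} ∪
      {w : ℂ | w.im = 0 ∧ p.re ≤ w.re ∧ w.re ≤ q.re} ∪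
      {w : ℂ | w.re = q.re ∧ 0 ≤ w.im ∧ w.im ≤ q.im} := by
    ext w
    constructor
    · rintro ⟨t, ht, rfl⟩
      unfold hγ
      split_ifs with c1 c2
      · exact Or.inl (Or.inl ⟨by simp, by simp; linarith [ht.1], by simp; linarith [ht.1]⟩)
      · exact Or.inl (Or.inr ⟨by simp, by simp; linarith, by simp; linarith [ht.2]⟩)
      · push_neg at c2
        exact Or.inr ⟨by simp, by simp; linarith, by simp; linarith [ht.2]⟩
    · rintro ((⟨h1, h2, h3⟩ | ⟨h1, h2, h3⟩) | ⟨h1, h2, h3⟩)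
      · refine ⟨p.im - w.im, ⟨by linarith, by linarith⟩, ?_⟩
        unfold hγ
        rw [if_pos (by linarith : p.im - w.im ≤ p.im)]
        rw [show p.im - (p.im - w.im) = w.im by ring, ← h1, mkC_self]
      · refine ⟨p.im + (w.re - p.re), ⟨by linarith, by linarith⟩, ?_⟩
        unfold hγ
        rcases eq_or_lt_of_le h2 with hx | hx
        · rw [if_pos (by linarith : p.im + (w.re - p.re) ≤ p.im)]
          apply Complex.ext
          · simp only [mkC_re]; rw [hx]
          · simp only [mkC_im]; rw [← hx, h1]; ring
        · rw [if_neg (by push_neg; linarith), if_pos (by linarith)]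
          rw [show p.re + (p.im + (w.re - p.re) - p.im) = w.re by ring, ← h1, mkC_self]
      · refine ⟨p.im + (q.re - p.re) + w.im, ⟨by linarith, by linarith⟩, ?_⟩
        unfold hγ
        rcases eq_or_lt_of_le h2 with hs | hs
        · rw [if_neg (by push_neg; linarith), if_pos (by rw [← hs]; linarith)]
          apply Complex.ext
          · simp only [mkC_re]; rw [h1, ← hs]; ring
          · simp only [mkC_im]; rw [← hs]
        · rw [if_neg (by push_neg; linarith), if_neg (by push_neg; linarith)]
          rw [show p.im + (q.re - p.re) + w.im - (p.im + (q.re - p.re)) = w.im by ring,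
            ← h1, mkC_self]
  refine
  { len := p.im + (q.re - p.re) + q.im
    γ := hγ p q
    ξ := hξ p q
    len_pos := by linarith
    γ_cont := hγcont
    ξ_cont := by
      unfold hξ
      exact (((continuous_const.add (((Complex.continuous_re.max continuous_const).min
        continuous_const).sub continuous_const)).sub
        (continuous_const.max ((Complex.continuous_im.min continuous_const).sub
          ((Complex.continuous_re.sub continuous_const).abs)))).add
        (continuous_const.max ((Complex.continuous_im.min continuous_const).sub
          ((Complex.continuous_re.sub continuous_const).abs))))
    γ_zero := by
      unfold hγ
      rw [if_pos hP0]
      simpa using mkC_self p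
    γ_len := by
      unfold hγ
      rw [if_neg (by push_neg; linarith)]
      rcases eq_or_lt_of_le hQ0 with h | h
      · rw [if_pos (by rw [← h]; linarith)]
        apply Complex.ext
        · simp only [mkC_re]; rw [← h]; ring
        · simp only [mkC_im]; exact h
      · rw [if_neg (by push_neg; linarith)]
        rw [show p.im + (q.re - p.re) + q.im - (p.im + (q.re - p.re)) = q.im by ring, mkC_self]
    γ_mem := ?_
    ξγ := ?_
    ξ_mem := ?_
    hull_eq := ?_
    locconst := ?_ }
  · -- γ_mem
    intro t ht
    have hmem := (himage.le) ⟨t, ht, rfl⟩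
    rcases hmem with ((⟨h1, h2, h3⟩ | ⟨h1, h2, h3⟩) | ⟨h1, h2, h3⟩)
    · have := hSp (hγ p q t).im h2 h3
      rwa [← h1, mkC_self] at this
    · exact mem_Sspace_iff.2 (Or.inl h1)
    · have := hSq (hγ p q t).im h2 h3
      rwa [← h1, mkC_self] at this
  · -- ξγ
    intro t ht
    obtain ⟨ht0, ht1⟩ := ht
    unfold hγ
    split_ifs with c1 c2
    · rw [hξ1 (p.im - t) (by linarith) (by linarith)]
      ring
    · push_neg at c1
      rw [hξ2 (p.re + (t - p.im)) (by linarith) (by linarith)]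
      ring
    · push_neg at c1 c2
      rw [hξ3 (t - (p.im + (q.re - p.re))) (by linarith) (by linarith)]
      ring
  · -- ξ_mem
    intro w hw
    unfold hξ
    have hwim := Sspace.im_nonneg hw
    have b1 : p.re ≤ min (max w.re p.re) q.re := le_min (le_max_right _ _) hlt.le
    have b2 : min (max w.re p.re) q.re ≤ q.re := min_le_right _ _
    have b3 : (0:ℝ) ≤ max 0 (min w.im p.im - |w.re - p.re|) := le_max_left _ _
    have b4 : max 0 (min w.im p.im - |w.re - p.re|) ≤ p.im :=
      max_le hP0 (by linarith [min_le_right w.im p.im, abs_nonneg (w.re - p.re)])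
    have b5 : (0:ℝ) ≤ max 0 (min w.im q.im - |w.re - q.re|) := le_max_left _ _
    have b6 : max 0 (min w.im q.im - |w.re - q.re|) ≤ q.im :=
      max_le hQ0 (by linarith [min_le_right w.im q.im, abs_nonneg (w.re - q.re)])
    refine Set.mem_Icc.2 ⟨by linarith, by linarith⟩
  · -- hull_eq
    rw [himage]
    apply le_antisymm
    · apply sHull_subset_of
      · exact Or.inl (Or.inl ⟨rfl, hP0, le_refl _⟩)
      · exact Or.inr ⟨rfl, hQ0, le_refl _⟩
      · rintro w ((⟨h1, h2, h3⟩ | ⟨h1, h2, h3⟩) | ⟨h1, h2, h3⟩)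
        · have := hSp w.im h2 h3; rwa [← h1, mkC_self] at this
        · exact mem_Sspace_iff.2 (Or.inl h1)
        · have := hSq w.im h2 h3; rwa [← h1, mkC_self] at this
      · rw [← himage]
        exact ((isCompact_Icc).image hγcont).isClosed
      · rw [← himage]
        exact ⟨⟨hγ p q 0, ⟨0, ⟨le_refl _, by linarith⟩, rfl⟩⟩,
          (isPreconnected_Icc).image _ hγcont.continuousOn⟩
    · -- minimality
      intro z hz
      intro C hC
      obtain ⟨hpq, hCS, hCcl, hCconn⟩ := hC
      have hCp : p ∈ C := hpq (Or.inl rfl)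
      have hCq : q ∈ C := hpq (Or.inr rfl)
      -- case A : on the vertical segment at p.re
      have caseA : z.re = p.re → 0 ≤ z.im → z.im < p.im → z ∈ C := by
        intro h1 h2 h3
        have hPpos : 0 < p.im := lt_of_le_of_lt h2 h3
        obtain ⟨m, hm⟩ := hPi hPpos
        refine mem_of_sep hCS hCconn.isPreconnected hCp hCq
          (O := {w : ℂ | z.im < w.im ∧ |w.re - z.re| < 1}) ?_ ?_ ?_
          (fun hh => hne (by rw [hh, h1]))
          (branch_closure ⟨m, h1.trans hm⟩ h2)
        · exact IsOpen.inter (isOpen_lt continuous_const Complex.continuous_im)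
            (isOpen_lt ((Complex.continuous_re.sub continuous_const).abs) continuous_const)
        · exact ⟨h3, by rw [h1]; simp⟩
        · rintro ⟨hA1, hA2⟩
          obtain ⟨m', hm'⟩ := hQi (lt_of_le_of_lt h2 hA1)
          rw [h1, hm', hm] at hA2
          have := int_abs_lt_one hA2
          rw [← hm', ← hm] at this
          exact hne (this.symm)
      -- case B : on the vertical segment at q.re
      have caseB : z.re = q.re → 0 ≤ z.im → z.im < q.im → z ∈ C := by
        intro h1 h2 h3
        have hQpos : 0 < q.im := lt_of_le_of_lt h2 h3
        obtain ⟨m, hm⟩ := hQi hQpos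
        refine mem_of_sep hCS hCconn.isPreconnected hCq hCp
          (O := {w : ℂ | z.im < w.im ∧ |w.re - z.re| < 1}) ?_ ?_ ?_
          (fun hh => hne (by rw [hh, h1]))
          (branch_closure ⟨m, h1.trans hm⟩ h2)
        · exact IsOpen.inter (isOpen_lt continuous_const Complex.continuous_im)
            (isOpen_lt ((Complex.continuous_re.sub continuous_const).abs) continuous_const)
        · exact ⟨h3, by rw [h1]; simp⟩
        · rintro ⟨hA1, hA2⟩
          obtain ⟨m', hm'⟩ := hPi (lt_of_le_of_lt h2 hA1)
          rw [h1, hm', hm] at hA2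
          have := int_abs_lt_one hA2
          rw [← hm', ← hm] at this
          exact hne this
      -- case C : interior real point
      have caseC : z.im = 0 → p.re < z.re → z.re < q.re → z ∈ C := by
        intro h1 h2 h3
        refine mem_of_sep hCS hCconn.isPreconnected hCq hCp
          (O := {w : ℂ | z.re < w.re}) (isOpen_lt continuous_const Complex.continuous_re)
          h3 (by simpa using not_lt.2 h2.le) (fun hh => by rw [hh] at h2; exact lt_irrefl _ h2)
          (right_closure h1)
      rcases hz with ((⟨h1, h2, h3⟩ | ⟨h1, h2, h3⟩) | ⟨h1, h2, h3⟩)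
      · rcases eq_or_lt_of_le h3 with h | h
        · exact (Complex.ext h1 h : z = p) ▸ hCp
        · exact caseA h1 h2 h
      · rcases eq_or_lt_of_le h2 with h | h
        · rcases eq_or_lt_of_le hP0 with hh | hh
          · exact (Complex.ext h.symm (by rw [h1, ← hh]) : z = p) ▸ hCp
          · exact caseA h.symm (by rw [h1]) (by rw [h1]; exact hh)
        rcases eq_or_lt_of_le h3 with h' | h'
        · rcases eq_or_lt_of_le hQ0 with hh | hh
          · exact (Complex.ext h' (by rw [h1, ← hh]) : z = q) ▸ hCq
          · exact caseB h' (by rw [h1]) (by rw [h1]; exact hh)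
        · exact caseC h1 h h'
      · rcases eq_or_lt_of_le h3 with h | h
        · exact (Complex.ext h1 h : z = q) ▸ hCq
        · exact caseB h1 h2 h
  · -- locconst
    intro w hw hwim
    rw [himage] at hwim
    -- helper for evaluating ξ at points with given re behaviour
    have hval : ∀ w' : ℂ, w' ∈ Sspace → w'.re ≠ p.re → w'.re ≠ q.re →
        hξ p q w' = p.im + (min (max w'.re p.re) q.re - p.re) := by
      intro w' hw'S hne1 hne2
      unfold hξ
      rw [term_vanish hP0 hP1 hPi (Sspace.im_nonneg hw'S)
          (fun h => Sspace.int_re_of_im_pos hw'S h) hne1,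
        term_vanish hQ0 hQ1 hQi (Sspace.im_nonneg hw'S)
          (fun h => Sspace.int_re_of_im_pos hw'S h) hne2]
      ring
    rcases lt_trichotomy w.re p.re with hL | hE | hG
    · -- left of the arc
      refine ⟨p.re - w.re, by linarith, fun w' hw' hd => ?_⟩
      have h3 := abs_lt.1 (lt_of_le_of_lt (dist_re_le w' w) hd)
      have hlt' : w'.re < p.re := by linarith
      have e : ∀ u : ℂ, u ∈ Sspace → u.re < p.re → hξ p q u = p.im := by
        intro u hu h
        rw [hval u hu (ne_of_lt h) (ne_of_lt (lt_trans h hlt)),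
          max_eq_right h.le, min_eq_left hlt.le]
        ring
      exact (e w' hw' hlt').trans (e w hw hL).symm
    · -- over `p`
      have hgt : p.im < w.im := by
        by_contra hc
        push_neg at hc
        exact hwim (Or.inl (Or.inl ⟨hE, Sspace.im_nonneg hw, hc⟩))
      have him0 : 0 < w.im := lt_of_le_of_lt hP0 hgt
      obtain ⟨m, hm⟩ := Sspace.int_re_of_im_pos hw him0
      refine ⟨min (w.im - p.im) (min w.im 1), lt_min (by linarith) (lt_min him0 one_pos),
        fun w' hw' hd => ?_⟩
      have hda := abs_lt.1 (lt_of_le_of_lt (dist_im_le w' w) (lt_of_lt_of_le hd (min_le_left _ _)))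
      have hdb := abs_lt.1 (lt_of_le_of_lt (dist_im_le w' w)
        (lt_of_lt_of_le hd (le_trans (min_le_right _ _) (min_le_left _ _))))
      have hdc := abs_lt.1 (lt_of_le_of_lt (dist_re_le w' w)
        (lt_of_lt_of_le hd (le_trans (min_le_right _ _) (min_le_right _ _))))
      have him' : 0 < w'.im := by linarith
      obtain ⟨m', hm'⟩ := Sspace.int_re_of_im_pos hw' him'
      have hre' : w'.re = w.re := by
        rw [hm', hm]
        exact int_abs_lt_one (by rw [← hm', ← hm]; exact abs_lt.2 ⟨hdc.1, hdc.2⟩)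
      have e : ∀ u : ℂ, 0 ≤ u.im → p.im ≤ u.im → u.re = p.re → hξ p q u = 0 := by
        intro u hu0 hu1 hu2
        unfold hξ
        rw [term_on hP0 hu2 hu0,
          term_vanish hQ0 hQ1 hQi hu0 (fun _ => ⟨m, by rw [hu2, ← hE]; exact hm⟩)
            (by rw [hu2]; exact hne),
          hu2, max_self, min_eq_left hlt.le, min_eq_right hu1]
        ring
      exact (e w' him'.le (by linarith) (hre'.trans hE)).trans (e w him0.le hgt.le hE).symm
    rcases lt_trichotomy w.re q.re with hG1 | hE2 | hG2
    · -- over an interior integer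
      have him0 : 0 < w.im := by
        rcases eq_or_lt_of_le (Sspace.im_nonneg hw) with h | h
        · exact absurd (Or.inl (Or.inr ⟨h.symm, (le_of_lt hG), le_of_lt hG1⟩)) hwim
        · exact h
      obtain ⟨m, hm⟩ := Sspace.int_re_of_im_pos hw him0
      refine ⟨min w.im 1, lt_min him0 one_pos, fun w' hw' hd => ?_⟩
      have hdb := abs_lt.1 (lt_of_le_of_lt (dist_im_le w' w)
        (lt_of_lt_of_le hd (min_le_left _ _)))
      have hdc := abs_lt.1 (lt_of_le_of_lt (dist_re_le w' w)
        (lt_of_lt_of_le hd (min_le_right _ _)))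
      have him' : 0 < w'.im := by linarith
      obtain ⟨m', hm'⟩ := Sspace.int_re_of_im_pos hw' him'
      have hre' : w'.re = w.re := by
        rw [hm', hm]
        exact int_abs_lt_one (by rw [← hm', ← hm]; exact abs_lt.2 ⟨hdc.1, hdc.2⟩)
      have e : ∀ u : ℂ, u ∈ Sspace → u.re = w.re → hξ p q u = p.im + (w.re - p.re) := by
        intro u hu h
        rw [hval u hu (by rw [h]; exact ne_of_gt hG) (by rw [h]; exact ne_of_lt hG1), h,
          max_eq_left (le_of_lt hG), min_eq_left (le_of_lt hG1)]
      exact (e w' hw' hre').trans (e w hw rfl).symm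
    · -- over `q`
      have hgt : q.im < w.im := by
        by_contra hc
        push_neg at hc
        exact hwim (Or.inr ⟨hE2, Sspace.im_nonneg hw, hc⟩)
      have him0 : 0 < w.im := lt_of_le_of_lt hQ0 hgt
      obtain ⟨m, hm⟩ := Sspace.int_re_of_im_pos hw him0
      refine ⟨min (w.im - q.im) (min w.im 1), lt_min (by linarith) (lt_min him0 one_pos),
        fun w' hw' hd => ?_⟩
      have hda := abs_lt.1 (lt_of_le_of_lt (dist_im_le w' w) (lt_of_lt_of_le hd (min_le_left _ _)))
      have hdb := abs_lt.1 (lt_of_le_of_lt (dist_im_le w' w)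
        (lt_of_lt_of_le hd (le_trans (min_le_right _ _) (min_le_left _ _))))
      have hdc := abs_lt.1 (lt_of_le_of_lt (dist_re_le w' w)
        (lt_of_lt_of_le hd (le_trans (min_le_right _ _) (min_le_right _ _))))
      have him' : 0 < w'.im := by linarith
      obtain ⟨m', hm'⟩ := Sspace.int_re_of_im_pos hw' him'
      have hre' : w'.re = w.re := by
        rw [hm', hm]
        exact int_abs_lt_one (by rw [← hm', ← hm]; exact abs_lt.2 ⟨hdc.1, hdc.2⟩)
      have e : ∀ u : ℂ, 0 ≤ u.im → q.im ≤ u.im → u.re = q.re →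
          hξ p q u = p.im + (q.re - p.re) + q.im := by
        intro u hu0 hu1 hu2
        unfold hξ
        rw [term_on hQ0 hu2 hu0,
          term_vanish hP0 hP1 hPi hu0 (fun _ => ⟨m, by rw [hu2, ← hE2]; exact hm⟩)
            (by rw [hu2]; exact hne.symm),
          hu2, max_eq_left hlt.le, min_self, min_eq_right hu1]
        ring
      exact (e w' him'.le (by linarith) (hre'.trans hE2)).trans (e w him0.le hgt.le hE2).symm
    · -- right of the arc
      refine ⟨w.re - q.re, by linarith, fun w' hw' hd => ?_⟩
      have h3 := abs_lt.1 (lt_of_le_of_lt (dist_re_le w' w) hd)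
      have hgt' : q.re < w'.re := by linarith
      have e : ∀ u : ℂ, u ∈ Sspace → q.re < u.re → hξ p q u = p.im + (q.re - p.re) := by
        intro u hu h
        rw [hval u hu (ne_of_gt (lt_trans hlt h)) (ne_of_gt h),
          max_eq_left (by linarith), min_eq_right h.le]
      exact (e w' hw' hgt').trans (e w hw hG2).symm
/-! ### Construction of a parametrization for an arbitrary nondegenerate pair -/

open Classical in
noncomputable def mkParam (p q : ℂ) (hp : p ∈ Sspace) (hq : q ∈ Sspace) (hpq : p ≠ q) :
    Param p q :=
  if h : p.re < q.re then hparam p q hp hq h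
  else if h' : q.re < p.re then (hparam q p hq hp h').reverse
  else by
    have hre : p.re = q.re := le_antisymm (not_lt.1 h') (not_lt.1 h)
    exact if h'' : p.im < q.im then vparam p q hp hq hre h''
    else (vparam q p hq hp hre.symm (by
      rcases lt_trichotomy q.im p.im with hh | hh | hh
      · exact hh
      · exact absurd (Complex.ext hre hh.symm) hpq
      · exact absurd hh h'')).reverse

/-! ### Signed coverings at the level of coordinates -/

def SCov (L L' : ℝ) (ψ : ℝ → ℝ) (s : Bool) : Prop :=
  ∃ u v : ℝ, u ∈ Set.Icc 0 L ∧ v ∈ Set.Icc 0 L ∧ u ≤ v ∧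
    ψ u = (cond s 0 L') ∧ ψ v = (cond s L' 0)

lemma SCov.comp {L L' L'' : ℝ} {ψ ψ' : ℝ → ℝ} {s s' : Bool}
    (hψ : ContinuousOn ψ (Set.Icc 0 L)) (h1 : SCov L L' ψ s) (h2 : SCov L' L'' ψ' s') :
    SCov L L'' (fun t => ψ' (ψ t)) (s == s') := by
  obtain ⟨u, v, hu, hv, huv, hψu, hψv⟩ := h1
  obtain ⟨u', v', hu', hv', huv', hψu', hψv'⟩ := h2
  have hIcc : Set.Icc u v ⊆ Set.Icc 0 L := Set.Icc_subset_Icc hu.1 hv.2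
  cases s with
  | true =>
    simp only [cond] at hψu hψv
    have hsub : Set.Icc (ψ u) (ψ v) ⊆ ψ '' Set.Icc u v :=
      intermediate_value_Icc huv (hψ.mono hIcc)
    obtain ⟨q0, hq0, hq0v⟩ := hsub (by rw [hψu, hψv]; exact ⟨hv'.1, hv'.2⟩)
    have hsub2 : Set.Icc (ψ u) (ψ q0) ⊆ ψ '' Set.Icc u q0 :=
      intermediate_value_Icc hq0.1 (hψ.mono (Set.Icc_subset_Icc hu.1 (le_trans hq0.2 hv.2)))
    obtain ⟨p0, hp0, hp0v⟩ := hsub2 (by rw [hψu, hq0v]; exact ⟨hu'.1, huv'⟩)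
    have hb : (true == s') = s' := by cases s' <;> rfl
    refine ⟨p0, q0, ⟨le_trans hu.1 hp0.1, le_trans hp0.2 (le_trans hq0.2 hv.2)⟩,
      ⟨le_trans hu.1 hq0.1, le_trans hq0.2 hv.2⟩, hp0.2, ?_, ?_⟩
    · show ψ' (ψ p0) = cond (true == s') 0 L''
      rw [hb, hp0v, hψu']
    · show ψ' (ψ q0) = cond (true == s') L'' 0
      rw [hb, hq0v, hψv']
  | false =>
    simp only [cond] at hψu hψv
    have hsub : Set.Icc (ψ v) (ψ u) ⊆ ψ '' Set.Icc u v :=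
      intermediate_value_Icc' huv (hψ.mono hIcc)
    obtain ⟨q0, hq0, hq0v⟩ := hsub (by rw [hψu, hψv]; exact ⟨hu'.1, hu'.2⟩)
    have hsub2 : Set.Icc (ψ q0) (ψ u) ⊆ ψ '' Set.Icc u q0 :=
      intermediate_value_Icc' hq0.1 (hψ.mono (Set.Icc_subset_Icc hu.1 (le_trans hq0.2 hv.2)))
    obtain ⟨p0, hp0, hp0v⟩ := hsub2 (by rw [hψu, hq0v]; exact ⟨huv', hv'.2⟩)
    have hb1 : cond (false == s') 0 L'' = cond s' L'' 0 := by cases s' <;> rfl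
    have hb2 : cond (false == s') L'' 0 = cond s' 0 L'' := by cases s' <;> rfl
    refine ⟨p0, q0, ⟨le_trans hu.1 hp0.1, le_trans hp0.2 (le_trans hq0.2 hv.2)⟩,
      ⟨le_trans hu.1 hq0.1, le_trans hq0.2 hv.2⟩, hp0.2, ?_, ?_⟩
    · show ψ' (ψ p0) = cond (false == s') 0 L''
      rw [hb1, hp0v, hψv']
    · show ψ' (ψ q0) = cond (false == s') L'' 0
      rw [hb2, hq0v, hψu']

/-- Extraction of marked points from a `PosCovers`-style hypothesis. -/
lemma marked_aux {p₀ q₀ p₁ q₁ : ℂ} (P : Param p₀ q₀) (P' : Param p₁ q₁) (G : ℂ → ℂ)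
    {x y : ℂ} (hy : y ∈ sHull {p₀, q₀}) (hxy : x ∈ sHull {p₀, y}) :
    ∃ u v : ℝ, u ∈ Set.Icc (0:ℝ) P.len ∧ v ∈ Set.Icc (0:ℝ) P.len ∧ u ≤ v ∧
      P'.ξ (G (P.γ u)) = P'.ξ (G x) ∧ P'.ξ (G (P.γ v)) = P'.ξ (G y) := by
  rw [P.hull_eq] at hy
  obtain ⟨hle, hxim⟩ := P.ξ_mono hy hxy
  refine ⟨P.ξ x, P.ξ y, P.ξ_mem x (P.image_subset_S hxim), P.ξ_mem y (P.image_subset_S hy),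
    hle, ?_, ?_⟩
  · rw [P.γξ hxim]
  · rw [P.γξ hy]
/-! ### Chains of retracted maps -/

lemma Sspace_sub_int {z : ℂ} (hz : z ∈ Sspace) (k : ℤ) : z - (k : ℂ) ∈ Sspace := by
  have h := Sspace_add_int hz (-k)
  have : z + ((-k : ℤ) : ℂ) = z - (k : ℂ) := by push_cast; ring
  rwa [this] at h

def ChainOK (F : ℂ → ℂ) {p q p' q' : ℂ} (P0 : Param p q) (Pe : Param p' q')
    (n : ℕ) (KK : ℤ) (itin : ℕ → Set ℂ) (Φ : ℝ → ℝ) : Prop :=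
  ContinuousOn Φ (Set.Icc 0 P0.len) ∧ Set.MapsTo Φ (Set.Icc 0 P0.len) (Set.Icc 0 Pe.len) ∧
  ∀ t ∈ Set.Icc (0:ℝ) P0.len,
    (∃ ε > 0, ∀ t' ∈ Set.Icc (0:ℝ) P0.len, |t' - t| < ε → Φ t' = Φ t) ∨
    (F^[n] (P0.γ t) = Pe.γ (Φ t) + (KK : ℂ) ∧ ∀ i < n, F^[i] (P0.γ t) ∈ trZ (itin i))

lemma chainOK_base (F : ℂ → ℂ) {p q : ℂ} (P0 : Param p q) (itin : ℕ → Set ℂ) :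
    ChainOK F P0 P0 0 0 itin id := by
  refine ⟨continuousOn_id, fun t ht => ht, fun t ht => Or.inr ⟨by simp, fun i hi => by omega⟩⟩

lemma chainOK_step {F : ℂ → ℂ} (hF : DegMap 1 F) {p q p' q' p'' q'' : ℂ}
    {P0 : Param p q} {Pe : Param p' q'} (Pn : Param p'' q'')
    {n : ℕ} {KK : ℤ} {itin : ℕ → Set ℂ} {Φ : ℝ → ℝ}
    (hch : ChainOK F P0 Pe n KK itin Φ) (k : ℤ)
    (hitin : itin n = Pe.γ '' Set.Icc (0:ℝ) Pe.len) :
    ChainOK F P0 Pn (n+1) (KK + k) itin (fun t => Pn.ξ (F (Pe.γ (Φ t)) - (k:ℂ))) := by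
  obtain ⟨hcont, hmap, hdich⟩ := hch
  have hγΦS : ∀ t ∈ Set.Icc (0:ℝ) P0.len, Pe.γ (Φ t) ∈ Sspace :=
    fun t ht => Pe.γ_mem _ (hmap ht)
  have hτS : ∀ t ∈ Set.Icc (0:ℝ) P0.len, F (Pe.γ (Φ t)) - (k:ℂ) ∈ Sspace :=
    fun t ht => Sspace_sub_int (hF.1 (hγΦS t ht)) k
  have hτcont : ContinuousOn (fun t => F (Pe.γ (Φ t)) - (k:ℂ)) (Set.Icc 0 P0.len) := by
    apply ContinuousOn.sub _ continuousOn_const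
    exact hF.2.1.comp (Pe.γ_cont.comp_continuousOn hcont) hγΦS
  refine ⟨Pn.ξ_cont.comp_continuousOn hτcont, fun t ht => Pn.ξ_mem _ (hτS t ht), ?_⟩
  intro t ht
  rcases hdich t ht with ⟨ε, hε, hloc⟩ | ⟨hgen, hitins⟩
  · refine Or.inl ⟨ε, hε, fun t' ht' hd => ?_⟩
    show Pn.ξ (F (Pe.γ (Φ t')) - (k:ℂ)) = Pn.ξ (F (Pe.γ (Φ t)) - (k:ℂ))
    rw [hloc t' ht' hd]
  · by_cases hwmem : F (Pe.γ (Φ t)) - (k:ℂ) ∈ Pn.γ '' Set.Icc (0:ℝ) Pn.len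
    · refine Or.inr ⟨?_, ?_⟩
      · show F^[n+1] (P0.γ t) = Pn.γ (Pn.ξ (F (Pe.γ (Φ t)) - (k:ℂ))) + ((KK + k : ℤ) : ℂ)
        rw [Function.iterate_succ_apply', hgen, hF.translate (hγΦS t ht) KK, Pn.γξ hwmem]
        push_cast
        ring
      · intro i hi
        rcases Nat.lt_succ_iff_lt_or_eq.1 hi with h | h
        · exact hitins i h
        · subst h
          rw [hgen, hitin]
          exact mem_trZ_of_mem (⟨Φ t, hmap ht, rfl⟩ :
            Pe.γ (Φ t) ∈ Pe.γ '' Set.Icc (0:ℝ) Pe.len) KK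
    · obtain ⟨ε, hε, hconst⟩ := Pn.locconst _ (hτS t ht) hwmem
      obtain ⟨δ, hδ, hdd⟩ := Metric.continuousWithinAt_iff.1 (hτcont t ht) ε hε
      refine Or.inl ⟨δ, hδ, fun t' ht' hd => ?_⟩
      show Pn.ξ (F (Pe.γ (Φ t')) - (k:ℂ)) = Pn.ξ (F (Pe.γ (Φ t)) - (k:ℂ))
      exact hconst _ (hτS t' ht') (hdd ht' (by rwa [Real.dist_eq]))

/-! ### Existence of a genuine fixed point -/

lemma exists_genuine_fix {L : ℝ} (hL : 0 < L) {Φ : ℝ → ℝ} (G : ℝ → Prop)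
    (hcont : ContinuousOn Φ (Set.Icc 0 L))
    (hs : SCov L L Φ true)
    (hdich : ∀ t ∈ Set.Icc (0:ℝ) L, Φ t = t →
      (∃ ε > 0, ∀ t' ∈ Set.Icc (0:ℝ) L, |t' - t| < ε → Φ t' = Φ t) ∨ G t) :
    ∃ t ∈ Set.Icc (0:ℝ) L, Φ t = t ∧ G t := by
  by_contra hcon
  push_neg at hcon
  have hspur : ∀ t ∈ Set.Icc (0:ℝ) L, Φ t = t →
      ∃ ε > 0, ∀ t' ∈ Set.Icc (0:ℝ) L, |t' - t| < ε → Φ t' = t := by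
    intro t ht hfix
    rcases hdich t ht hfix with ⟨ε, hε, hloc⟩ | hG
    · exact ⟨ε, hε, fun t' ht' hd => (hloc t' ht' hd).trans hfix⟩
    · exact absurd hG (hcon t ht hfix)
  obtain ⟨u, v, hu, hv, huv, hΦu, hΦv⟩ := hs
  simp only [cond] at hΦu hΦv
  -- the key lemma : no sign change is possible
  have key : ∀ t₁ t₂ : ℝ, 0 ≤ t₁ → t₂ ≤ L → t₁ < t₂ → Φ t₁ < t₁ → t₂ ≤ Φ t₂ → False := by
    intro t₁ t₂ h1 h2 h12 hneg hpos
    have hsub : Set.Icc t₁ t₂ ⊆ Set.Icc 0 L := Set.Icc_subset_Icc h1 h2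
    have hg : ContinuousOn (fun t => Φ t - t) (Set.Icc t₁ t₂) :=
      (hcont.mono hsub).sub continuousOn_id
    set Z := Set.Icc t₁ t₂ ∩ (fun t => Φ t - t) ⁻¹' {0} with hZ
    have hZne : Z.Nonempty := by
      have him := intermediate_value_Icc h12.le hg
      obtain ⟨t0, ht0, ht0v⟩ := him (⟨by simp; linarith, by simp; linarith⟩ :
        (0:ℝ) ∈ Set.Icc (Φ t₁ - t₁) (Φ t₂ - t₂))
      exact ⟨t0, ht0, by simpa using ht0v⟩
    have hZcl : IsClosed Z := hg.preimage_isClosed_of_isClosed isClosed_Icc isClosed_singleton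
    have hZbdd : BddBelow Z := ⟨t₁, fun z hz => hz.1.1⟩
    have ht₀Z : sInf Z ∈ Z := hZcl.csInf_mem hZne hZbdd
    set t₀ := sInf Z with ht₀
    obtain ⟨⟨ht₀1, ht₀2⟩, ht₀fix⟩ := ht₀Z
    have ht₀fix' : Φ t₀ = t₀ := by simpa [sub_eq_zero] using ht₀fix
    have ht₀gt : t₁ < t₀ := by
      rcases eq_or_lt_of_le ht₀1 with h | h
      · rw [← h] at ht₀fix'; linarith
      · exact h
    have hgneg : ∀ t, t₁ ≤ t → t < t₀ → Φ t - t < 0 := by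
      intro t ha hb
      rcases lt_trichotomy (Φ t - t) 0 with h | h | h
      · exact h
      · exfalso
        have : t ∈ Z := ⟨⟨ha, by linarith⟩, by simpa using h⟩
        have := csInf_le hZbdd this
        linarith
      · exfalso
        have hsub2 : Set.Icc t₁ t ⊆ Set.Icc t₁ t₂ := Set.Icc_subset_Icc (le_refl _) (by linarith)
        have him := intermediate_value_Icc ha (hg.mono hsub2)
        obtain ⟨t0, ht0, ht0v⟩ := him (⟨by linarith, by linarith⟩ :
          (0:ℝ) ∈ Set.Icc (Φ t₁ - t₁) (Φ t - t))
        have : t0 ∈ Z := ⟨⟨ht0.1, by linarith [ht0.2]⟩, by simpa using ht0v⟩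
        have := csInf_le hZbdd this
        linarith [ht0.2]
    obtain ⟨ε, hε, hloc⟩ := hspur t₀ ⟨by linarith, by linarith⟩ ht₀fix'
    set t' := max t₁ (t₀ - ε/2) with ht'
    have ht'1 : t₁ ≤ t' := le_max_left _ _
    have ht'2 : t' < t₀ := max_lt ht₀gt (by linarith)
    have ht'3 : |t' - t₀| < ε := by
      rw [abs_lt]
      constructor
      · have : t₀ - ε/2 ≤ t' := le_max_right _ _
        linarith
      · linarith
    have := hloc t' ⟨by linarith, by linarith⟩ ht'3
    have := hgneg t' ht'1 ht'2
    rw [‹Φ t' = t₀›] at this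
    linarith
  -- now derive the contradiction
  rcases eq_or_lt_of_le hu.1 with hu0 | hu0
  · -- u = 0
    have hΦ00 : Φ 0 = 0 := by rw [← hu0] at hΦu; exact hΦu
    obtain ⟨ε0, hε0, hloc0⟩ := hspur 0 ⟨le_refl _, hL.le⟩ hΦ00
    have hv0 : 0 < v := by
      rcases eq_or_lt_of_le (hu0.le.trans huv) with h | h
      · exfalso; rw [← h] at hΦv; rw [hΦ00] at hΦv; linarith
      · exact h
    set t₁ := min (ε0/2) (v/2) with ht₁
    have ht₁0 : 0 < t₁ := lt_min (by linarith) (by linarith)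
    have ht₁v : t₁ < v := lt_of_le_of_lt (min_le_right _ _) (by linarith)
    have ht₁L : t₁ ≤ L := by
      have := min_le_right (ε0/2) (v/2)
      linarith [hv.2]
    have hΦt₁ : Φ t₁ = 0 := by
      apply hloc0 t₁ ⟨ht₁0.le, ht₁L⟩
      rw [sub_zero, abs_of_pos ht₁0]
      have := min_le_left (ε0/2) (v/2)
      linarith
    exact key t₁ v ht₁0.le hv.2 ht₁v (by rw [hΦt₁]; exact ht₁0)
      (by rw [hΦv]; exact hv.2)
  · -- 0 < u
    have hneq : u < v := by
      rcases eq_or_lt_of_le huv with h | h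
      · exfalso; rw [h, hΦv] at hΦu; linarith
      · exact h
    exact key u v hu.1 hv.2 hneq (by linarith) (by rw [hΦv]; exact hv.2)
/-! ### Continuity and covering data for the step maps -/

lemma ψ_cont {F : ℂ → ℂ} (hF : DegMap 1 F) {p q p' q' : ℂ} (P : Param p q) (P' : Param p' q')
    (k : ℤ) : ContinuousOn (fun t => P'.ξ (F (P.γ t) - (k:ℂ))) (Set.Icc 0 P.len) :=
  P'.ξ_cont.comp_continuousOn
    ((hF.2.1.comp P.γ_cont.continuousOn P.γ_mem).sub continuousOn_const)

lemma scov_of_pos {F : ℂ → ℂ} {k : ℤ} {p q p' q' : ℂ} (P : Param p q) (P' : Param p' q')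
    (hcov : PosCovers (fun z => F z - (k:ℂ)) p q p' q') :
    SCov P.len P'.len (fun t => P'.ξ (F (P.γ t) - (k:ℂ))) true := by
  obtain ⟨x, y, hx, hy, hxy, hGx, hGy⟩ := hcov
  obtain ⟨u, v, hu, hv, huv, e1, e2⟩ := marked_aux P P' (fun z => F z - (k:ℂ)) hy hxy
  refine ⟨u, v, hu, hv, huv, ?_, ?_⟩
  · show P'.ξ (F (P.γ u) - (k:ℂ)) = 0
    have h2 : P'.ξ (F x - (k:ℂ)) = 0 := by
      rw [show F x - (k:ℂ) = p' from hGx, P'.ξ_p]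
    exact e1.trans h2
  · show P'.ξ (F (P.γ v) - (k:ℂ)) = P'.len
    have h2 : P'.ξ (F y - (k:ℂ)) = P'.len := by
      rw [show F y - (k:ℂ) = q' from hGy, P'.ξ_q]
    exact e2.trans h2

lemma scov_of_neg {F : ℂ → ℂ} {k : ℤ} {p q p' q' : ℂ} (P : Param p q) (P' : Param p' q')
    (hcov : NegCovers (fun z => F z - (k:ℂ)) p q p' q') :
    SCov P.len P'.len (fun t => P'.ξ (F (P.γ t) - (k:ℂ))) false := by
  obtain ⟨x, y, hx, hy, hxy, hGx, hGy⟩ := hcov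
  obtain ⟨u, v, hu, hv, huv, e1, e2⟩ := marked_aux P P' (fun z => F z - (k:ℂ)) hy hxy
  refine ⟨u, v, hu, hv, huv, ?_, ?_⟩
  · show P'.ξ (F (P.γ u) - (k:ℂ)) = P'.len
    have h2 : P'.ξ (F x - (k:ℂ)) = P'.len := by
      rw [show F x - (k:ℂ) = q' from hGx, P'.ξ_q]
    exact e1.trans h2
  · show P'.ξ (F (P.γ v) - (k:ℂ)) = 0
    have h2 : P'.ξ (F y - (k:ℂ)) = 0 := by
      rw [show F y - (k:ℂ) = p' from hGy, P'.ξ_p]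
    exact e2.trans h2

lemma scov_id (L : ℝ) (hL : 0 < L) : SCov L L id true :=
  ⟨0, L, ⟨le_refl _, hL.le⟩, ⟨hL.le, le_refl _⟩, hL.le, rfl, rfl⟩


/-- Let `L = ⟨{a,b}⟩` and `K = ⟨{c,d}⟩` be oriented compact nondegenerate
intervals with `(K+ℤ) ∩ (L+ℤ) ⊆ {e}+ℤ` and `F(e) ∉ L+ℤ`. If `L` positively
`(F−k₁)`-covers `L`, `L` positively `(F−k₂)`-covers `K`, `K` negatively `(F−k₃)`-covers
`L` and `K` negatively `(F−k₄)`-covers `K`, then `Per(F) ⊇ ℕ∖{2}`. -/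
theorem statement15 (F : ℂ → ℂ) (hF : DegMap 1 F) (a b c d : ℂ)
    (ha : a ∈ Sspace) (hb : b ∈ Sspace) (hc : c ∈ Sspace) (hd : d ∈ Sspace)
    (hab : a ≠ b) (hcd : c ≠ d) (e : ℂ) (he : e ∈ Sspace)
    (hsep : trZ (sHull {c, d}) ∩ trZ (sHull {a, b}) ⊆ trZ {e})
    (hFe : F e ∉ trZ (sHull {a, b}))
    (k₁ k₂ k₃ k₄ : ℤ)
    (h1 : PosCovers (fun z => F z - (k₁ : ℂ)) a b a b)
    (h2 : PosCovers (fun z => F z - (k₂ : ℂ)) a b c d)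
    (h3 : NegCovers (fun z => F z - (k₃ : ℂ)) c d a b)
    (h4 : NegCovers (fun z => F z - (k₄ : ℂ)) c d c d) :
    {n : ℕ | 0 < n ∧ n ≠ 2} ⊆ PerSet F := by
  classical
  intro n hn
  obtain ⟨hn0, hn2⟩ := hn
  have PL := mkParam a b ha hb hab
  have PK := mkParam c d hc hd hcd
  have hcase : n = 1 ∨ 3 ≤ n := by omega
  rcases hcase with rfl | hge
  · -- period 1
    set itin1 : ℕ → Set ℂ := fun _ => sHull {a, b} with hitin1
    have c0 := chainOK_base F PL itin1
    have c1 := chainOK_step hF PL c0 k₁ (by simp only [hitin1]; exact PL.hull_eq)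
    have sc1 : SCov PL.len PL.len (fun t => PL.ξ (F (PL.γ (id t)) - (k₁:ℂ))) true := by
      exact SCov.comp continuousOn_id (scov_id PL.len PL.len_pos) (scov_of_pos PL PL h1)
    obtain ⟨t0, ht0, hfix, hGen⟩ := exists_genuine_fix PL.len_pos
      (G := fun t => F^[0+1] (PL.γ t) =
          PL.γ ((fun t => PL.ξ (F (PL.γ (id t)) - (k₁:ℂ))) t) + (((0:ℤ) + k₁ : ℤ):ℂ) ∧
        ∀ i < 0+1, F^[i] (PL.γ t) ∈ trZ (itin1 i))
      c1.1 sc1 (fun t ht _ => c1.2.2 t ht)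
    refine ⟨PL.γ t0, PL.γ_mem t0 ht0, one_pos, ⟨0 + k₁, ?_⟩, fun i hi0 hi1 => by omega⟩
    have h : F^[0+1] (PL.γ t0) =
        PL.γ (PL.ξ (F (PL.γ (id t0)) - (k₁:ℂ))) + (((0:ℤ) + k₁ : ℤ):ℂ) := hGen.1
    rw [hfix] at h
    simpa using h
  · -- period n ≥ 3
    set m := n - 3 with hm
    set itin : ℕ → Set ℂ := fun i => if i ≤ 1 then sHull {c, d} else sHull {a, b} with hitin
    have hit0 : itin 0 = PK.γ '' Set.Icc (0:ℝ) PK.len := by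
      simp only [hitin, if_pos (by norm_num : (0:ℕ) ≤ 1)]
      exact PK.hull_eq
    have hit1 : itin 1 = PK.γ '' Set.Icc (0:ℝ) PK.len := by
      simp only [hitin, if_pos (le_refl 1)]
      exact PK.hull_eq
    have hitK1 : itin 1 = sHull {c, d} := by simp [hitin]
    have hitL : ∀ j, 2 ≤ j → itin j = sHull {a, b} := by
      intro j hj
      have hj' : ¬ (j ≤ 1) := by omega
      simp only [hitin]
      rw [if_neg hj']
    have hitLim : ∀ j, 2 ≤ j → itin j = PL.γ '' Set.Icc (0:ℝ) PL.len :=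
      fun j hj => (hitL j hj).trans PL.hull_eq
    have pre : ∀ m' : ℕ, ∃ Φ : ℝ → ℝ, ∃ KK : ℤ,
        ChainOK F PK PL (m'+2) KK itin Φ ∧ SCov PK.len PL.len Φ true := by
      intro m'
      induction m' with
      | zero =>
        have c0 := chainOK_base F PK itin
        have c1 := chainOK_step hF PK c0 k₄ hit0
        have c2 := chainOK_step hF PL c1 k₃ hit1
        refine ⟨_, 0 + k₄ + k₃, c2, ?_⟩
        have sA := SCov.comp continuousOn_id (scov_id PK.len PK.len_pos) (scov_of_neg PK PK h4)
        exact SCov.comp c1.1 sA (scov_of_neg PK PL h3)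
      | succ m' ih =>
        obtain ⟨Φ, KK, hch, hsc⟩ := ih
        refine ⟨_, KK + k₁, chainOK_step hF PL hch k₁ (hitLim (m'+2) (by omega)), ?_⟩
        exact SCov.comp hch.1 hsc (scov_of_pos PL PL h1)
    obtain ⟨Φ, KK, hch, hsc⟩ := pre m
    have hchain := chainOK_step hF PK hch k₂ (hitLim (m+2) (by omega))
    have hscov := SCov.comp hch.1 hsc (scov_of_pos PL PK h2)
    obtain ⟨t0, ht0, hfix, hGen⟩ := exists_genuine_fix PK.len_pos
      (G := fun t => F^[m+2+1] (PK.γ t) =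
          PK.γ ((fun t => PK.ξ (F (PL.γ (Φ t)) - (k₂:ℂ))) t) + ((KK + k₂ : ℤ):ℂ) ∧
        ∀ i < m+2+1, F^[i] (PK.γ t) ∈ trZ (itin i))
      hchain.1 hscov (fun t ht _ => hchain.2.2 t ht)
    set z := PK.γ t0 with hz
    have hzS : z ∈ Sspace := PK.γ_mem t0 ht0
    have hnm : m + 2 + 1 = n := by omega
    have hper : F^[n] z = z + ((KK + k₂ : ℤ):ℂ) := by
      have h : F^[m+2+1] (PK.γ t0) =
          PK.γ (PK.ξ (F (PL.γ (Φ t0)) - (k₂:ℂ))) + ((KK + k₂ : ℤ):ℂ) := hGen.1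
      have hfix' : PK.ξ (F (PL.γ (Φ t0)) - (k₂:ℂ)) = t0 := hfix
      rw [hfix'] at h
      rw [← hnm]
      exact h
    -- the itinerary memberships
    have hmem : ∀ i < n, F^[i] z ∈ trZ (itin i) := by
      intro i hi
      exact hGen.2 i (by omega)
    have htrK : F z ∈ trZ (sHull {c, d}) := by
      have h := hmem 1 (by omega)
      rw [hitK1] at h
      simpa using h
    -- `F z` cannot lie in `trZ L`
    have hFzL : F z ∈ trZ (sHull {a, b}) → False := by
      intro hL
      have hFze := hsep ⟨htrK, hL⟩
      obtain ⟨j, hj⟩ := mem_trZ_singleton hFze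
      have h2' := hmem 2 (by omega)
      rw [hitL 2 (le_refl _)] at h2'
      have hF2 : F^[2] z = F e + (j:ℂ) := by
        rw [show (2:ℕ) = 1+1 from rfl, Function.iterate_succ_apply', Function.iterate_one,
          hj, hF.translate he j]
      rw [hF2] at h2'
      exact hFe (trZ_of_add_int j h2')
    have key1 : ∀ k'' : ℤ, F z = z + (k'':ℂ) → False := by
      intro k'' hk''
      apply hFzL
      have h2' := hmem 2 (by omega)
      rw [hitL 2 (le_refl _)] at h2'
      have hF2 : F^[2] z = F z + (k'':ℂ) := by
        calc F^[2] z = F (F z) := by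
              rw [show (2:ℕ) = 1+1 from rfl, Function.iterate_succ_apply', Function.iterate_one]
        _ = F (z + (k'':ℂ)) := by rw [← hk'']
        _ = F z + (k'':ℂ) := hF.translate hzS k'' 
      rw [hF2] at h2'
      exact trZ_of_add_int k'' h2'
    refine ⟨z, hzS, hn0, ⟨KK + k₂, hper⟩, ?_⟩
    intro i hi0 hin k' hk'
    by_cases hilast : i + 1 < n
    · have hstep : F^[i+1] z = F z + (k':ℂ) := by
        rw [Function.iterate_succ_apply', hk', hF.translate hzS k']
      have hmem' := hmem (i+1) hilast
      rw [hitL (i+1) (by omega)] at hmem'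
      rw [hstep] at hmem'
      exact hFzL (trZ_of_add_int k' hmem')
    · have hieq : i + 1 = n := by omega
      have hstep : F^[n] z = F z + (k':ℂ) := by
        rw [← hieq, Function.iterate_succ_apply', hk', hF.translate hzS k']
      have hFz : F z = z + ((KK + k₂ - k' : ℤ):ℂ) := by
        have h := hper
        rw [hstep] at h
        push_cast
        push_cast at h
        linear_combination h
      exact key1 _ hFz

end
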